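/- If a > 1 and b = -(a+1)², then the derivative of the Melnikov function satisfies M′(h) < 0 for every h > 0. -/

import Mathlib

set_option maxHeartbeats 1000000

open Real


/-- The Melnikov function `M(h; a, b)` of the discontinuous SD oscillator. -/
noncomputable def Mel (a b h : ℝ) : ℝ :=
  -(Real.pi / 4) * (a + 1) ^ 2 * (5 * a ^ 2 + 10 * a + 4 * b + 5)
    - (15 * a ^ 2 + 4 * b + 5) * Real.sqrt h / Real.sqrt 2
    - (3 * a ^ 2 + 6 * a + 2 * b + 3) * Real.pi * h
    - (13 * Real.sqrt 2 / 3) * (h * Real.sqrt h)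
    - Real.pi * h ^ 2
    - (1 / 4) * (a ^ 2 - 2 * a + 2 * h + 1) * (5 * a ^ 2 - 10 * a + 4 * b + 2 * h + 5)
        * Real.arctan (Real.sqrt (2 * h) / (a - 1))
    + (1 / 4) * (a ^ 2 + 2 * a + 2 * h + 1) * (5 * a ^ 2 + 10 * a + 4 * b + 2 * h + 5)
        * Real.arctan (Real.sqrt (2 * h) / (a + 1))

private lemma my_arctan_le_self {y : ℝ} (hy : 0 ≤ y) : Real.arctan y ≤ y := by
  have h0 : 0 ≤ Real.arctan y := by
    rw [← Real.arctan_zero]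
    exact Real.arctan_strictMono.monotone hy
  calc Real.arctan y ≤ Real.tan (Real.arctan y) :=
        Real.le_tan h0 (Real.arctan_lt_pi_div_two y)
    _ = y := Real.tan_arctan y

private lemma hasDerivAt_arctan_sqrt {c : ℝ} (hc : 0 < c) {h : ℝ} (hh : 0 < h) :
    HasDerivAt (fun x : ℝ => Real.arctan (Real.sqrt (2 * x) / c))
      (c / (Real.sqrt (2 * h) * (c ^ 2 + 2 * h))) h := by
  have hs : 0 < Real.sqrt (2 * h) := Real.sqrt_pos.2 (by linarith)
  have hs2 : Real.sqrt (2 * h) ^ 2 = 2 * h := Real.sq_sqrt (by linarith)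
  have h2 : HasDerivAt (fun x : ℝ => 2 * x) 2 h := by
    simpa using (hasDerivAt_id h).const_mul (2:ℝ)
  have h1 : HasDerivAt (fun x : ℝ => Real.sqrt (2 * x)) (1 / Real.sqrt (2 * h)) h := by
    have := (Real.hasDerivAt_sqrt (show 2 * h ≠ 0 by positivity)).comp h h2
    refine this.congr_deriv ?_
    field_simp
  have h3 := (Real.hasDerivAt_arctan (Real.sqrt (2 * h) / c)).comp h (h1.div_const c)
  refine h3.congr_deriv ?_
  have hcd : c ^ 2 + 2 * h ≠ 0 := by positivity
  have hT2 : Real.sqrt 2 ^ 2 = 2 := Real.sq_sqrt (by norm_num)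
  have hR2 : Real.sqrt h ^ 2 = h := Real.sq_sqrt hh.le
  field_simp
  linear_combination -hs2

private lemma mel_hasDerivAt (a : ℝ) (ha : 1 < a) {h : ℝ} (hh : 0 < h) :
    HasDerivAt (Mel a (-(a + 1) ^ 2))
      (-6 * Real.sqrt (2 * h) - Real.pi * ((a + 1) ^ 2 + 2 * h)
        - ((a - 1) ^ 2 + 2 * h - 8 * a) * Real.arctan (Real.sqrt (2 * h) / (a - 1))
        + ((a + 1) ^ 2 + 2 * h) * Real.arctan (Real.sqrt (2 * h) / (a + 1))) h := by
  have ha1 : (0:ℝ) < a - 1 := by linarith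
  have ha2 : (0:ℝ) < a + 1 := by linarith
  have hR : 0 < Real.sqrt h := Real.sqrt_pos.2 hh
  have hS : 0 < Real.sqrt (2 * h) := Real.sqrt_pos.2 (by linarith)
  have hS2 : Real.sqrt (2 * h) ^ 2 = 2 * h := Real.sq_sqrt (by linarith)
  have hR2 : Real.sqrt h ^ 2 = h := Real.sq_sqrt hh.le
  have hT : (0:ℝ) < Real.sqrt 2 := by positivity
  have hT2 : Real.sqrt 2 ^ 2 = 2 := Real.sq_sqrt (by norm_num)
  have hSR : Real.sqrt (2 * h) = Real.sqrt 2 * Real.sqrt h := Real.sqrt_mul (by norm_num) h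
  set b : ℝ := -(a + 1) ^ 2 with hb
  have d1 : HasDerivAt (fun _ : ℝ => -(Real.pi / 4) * (a + 1) ^ 2 * (5 * a ^ 2 + 10 * a + 4 * b + 5)) 0 h :=
    hasDerivAt_const _ _
  have d2 : HasDerivAt (fun x : ℝ => (15 * a ^ 2 + 4 * b + 5) * Real.sqrt x / Real.sqrt 2)
      ((15 * a ^ 2 + 4 * b + 5) / (2 * Real.sqrt (2 * h))) h := by
    have := ((Real.hasDerivAt_sqrt hh.ne').const_mul (15 * a ^ 2 + 4 * b + 5)).div_const (Real.sqrt 2)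
    refine this.congr_deriv ?_
    rw [hSR]
    field_simp
  have d3 : HasDerivAt (fun x : ℝ => (3 * a ^ 2 + 6 * a + 2 * b + 3) * Real.pi * x)
      ((3 * a ^ 2 + 6 * a + 2 * b + 3) * Real.pi) h := by
    simpa using (hasDerivAt_id h).const_mul ((3 * a ^ 2 + 6 * a + 2 * b + 3) * Real.pi)
  have d4 : HasDerivAt (fun x : ℝ => 13 * Real.sqrt 2 / 3 * (x * Real.sqrt x))
      (13 / 2 * Real.sqrt (2 * h)) h := by
    have := ((hasDerivAt_id h).mul (Real.hasDerivAt_sqrt hh.ne')).const_mul (13 * Real.sqrt 2 / 3)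
    refine this.congr_deriv ?_
    rw [hSR]
    field_simp
    linear_combination -hR2 + id_eq h
  have d5 : HasDerivAt (fun x : ℝ => Real.pi * x ^ 2) (2 * Real.pi * h) h := by
    have := (hasDerivAt_pow 2 h).const_mul Real.pi
    refine this.congr_deriv ?_
    push_cast
    ring
  have hP1 : HasDerivAt (fun x : ℝ => a ^ 2 - 2 * a + 2 * x + 1) 2 h := by
    simpa using (((hasDerivAt_id h).const_mul (2:ℝ)).const_add (a ^ 2 - 2 * a)).add_const 1
  have hQ1 : HasDerivAt (fun x : ℝ => 5 * a ^ 2 - 10 * a + 4 * b + 2 * x + 5) 2 h := by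
    simpa using (((hasDerivAt_id h).const_mul (2:ℝ)).const_add (5 * a ^ 2 - 10 * a + 4 * b)).add_const 5
  have hP2 : HasDerivAt (fun x : ℝ => a ^ 2 + 2 * a + 2 * x + 1) 2 h := by
    simpa using (((hasDerivAt_id h).const_mul (2:ℝ)).const_add (a ^ 2 + 2 * a)).add_const 1
  have hQ2 : HasDerivAt (fun x : ℝ => 5 * a ^ 2 + 10 * a + 4 * b + 2 * x + 5) 2 h := by
    simpa using (((hasDerivAt_id h).const_mul (2:ℝ)).const_add (5 * a ^ 2 + 10 * a + 4 * b)).add_const 5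
  have harc1 := hasDerivAt_arctan_sqrt ha1 hh
  have harc2 := hasDerivAt_arctan_sqrt ha2 hh
  have hd1 : (a - 1) ^ 2 + 2 * h ≠ 0 := by positivity
  have hd2 : (a + 1) ^ 2 + 2 * h ≠ 0 := by positivity
  have d6 : HasDerivAt (fun x : ℝ => 1 / 4 * (a ^ 2 - 2 * a + 2 * x + 1)
        * (5 * a ^ 2 - 10 * a + 4 * b + 2 * x + 5) * Real.arctan (Real.sqrt (2 * x) / (a - 1)))
      (1 / 2 * ((a ^ 2 - 2 * a + 2 * h + 1) + (5 * a ^ 2 - 10 * a + 4 * b + 2 * h + 5))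
          * Real.arctan (Real.sqrt (2 * h) / (a - 1))
        + (a - 1) * (5 * a ^ 2 - 10 * a + 4 * b + 2 * h + 5) / (4 * Real.sqrt (2 * h))) h := by
    have := ((hP1.const_mul (1/4 : ℝ)).mul hQ1).mul harc1
    refine this.congr_deriv ?_
    simp only [Pi.mul_apply]
    field_simp
    ring
  have d7 : HasDerivAt (fun x : ℝ => 1 / 4 * (a ^ 2 + 2 * a + 2 * x + 1)
        * (5 * a ^ 2 + 10 * a + 4 * b + 2 * x + 5) * Real.arctan (Real.sqrt (2 * x) / (a + 1)))
      (1 / 2 * ((a ^ 2 + 2 * a + 2 * h + 1) + (5 * a ^ 2 + 10 * a + 4 * b + 2 * h + 5))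
          * Real.arctan (Real.sqrt (2 * h) / (a + 1))
        + (a + 1) * (5 * a ^ 2 + 10 * a + 4 * b + 2 * h + 5) / (4 * Real.sqrt (2 * h))) h := by
    have := ((hP2.const_mul (1/4 : ℝ)).mul hQ2).mul harc2
    refine this.congr_deriv ?_
    simp only [Pi.mul_apply]
    field_simp
    ring
  have dall := (((((d1.sub d2).sub d3).sub d4).sub d5).sub d6).add d7
  have hfun : Mel a b = (fun x : ℝ =>
      -(Real.pi / 4) * (a + 1) ^ 2 * (5 * a ^ 2 + 10 * a + 4 * b + 5)
        - (15 * a ^ 2 + 4 * b + 5) * Real.sqrt x / Real.sqrt 2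
        - (3 * a ^ 2 + 6 * a + 2 * b + 3) * Real.pi * x
        - 13 * Real.sqrt 2 / 3 * (x * Real.sqrt x)
        - Real.pi * x ^ 2
        - 1 / 4 * (a ^ 2 - 2 * a + 2 * x + 1) * (5 * a ^ 2 - 10 * a + 4 * b + 2 * x + 5)
            * Real.arctan (Real.sqrt (2 * x) / (a - 1))
        + 1 / 4 * (a ^ 2 + 2 * a + 2 * x + 1) * (5 * a ^ 2 + 10 * a + 4 * b + 2 * x + 5)
            * Real.arctan (Real.sqrt (2 * x) / (a + 1))) := rfl
  rw [hfun]
  refine dall.congr_deriv ?_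
  rw [hb]
  field_simp
  linear_combination -4 * hS2

/-- If `a > 1` and `b = -(a+1)²`, then `M'(h) < 0` for every `h > 0`. -/
theorem melnikov_first_deriv_neg_at_hopf (a : ℝ) (ha : 1 < a) :
    ∀ h : ℝ, 0 < h → deriv (Mel a (-(a + 1) ^ 2)) h < 0 := by
  intro h hh
  rw [(mel_hasDerivAt a ha hh).deriv]
  have ha1 : (0:ℝ) < a - 1 := by linarith
  have ha2 : (0:ℝ) < a + 1 := by linarith
  set s := Real.sqrt (2 * h) with hsdef
  have hs : 0 < s := Real.sqrt_pos.2 (by linarith)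
  have hs2 : s ^ 2 = 2 * h := Real.sq_sqrt (by linarith)
  have hpi : (3:ℝ) < Real.pi := Real.pi_gt_three
  have hA1 : Real.arctan (s / (a - 1)) = Real.pi / 2 - Real.arctan ((a - 1) / s) := by
    have := Real.arctan_inv_of_pos (div_pos ha1 hs)
    rwa [inv_div] at this
  have hA2 : Real.arctan (s / (a + 1)) = Real.pi / 2 - Real.arctan ((a + 1) / s) := by
    have := Real.arctan_inv_of_pos (div_pos ha2 hs)
    rwa [inv_div] at this
  set u := Real.arctan ((a - 1) / s) with hudef
  set v := Real.arctan ((a + 1) / s) with hvdef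
  have hu0 : 0 < u := by
    rw [hudef, ← Real.arctan_zero]
    exact Real.arctan_strictMono (div_pos ha1 hs)
  have hv0 : 0 < v := by
    rw [hvdef, ← Real.arctan_zero]
    exact Real.arctan_strictMono (div_pos ha2 hs)
  have huv : u < v := Real.arctan_strictMono (by
    apply div_lt_div_of_pos_right _ hs
    linarith)
  have hvge : Real.pi / 2 - s / (a + 1) ≤ v := by
    have h1 : Real.arctan (s / (a + 1)) ≤ s / (a + 1) :=
      my_arctan_le_self (le_of_lt (div_pos hs ha2))
    rw [hA2] at h1
    linarith
  have h2h : 2 * h = s ^ 2 := hs2.symm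
  rw [hA1, hA2, h2h]
  rcases le_or_gt 0 ((a - 1) ^ 2 + s ^ 2 - 8 * a) with hc | hc
  · -- coefficient nonnegative case
    have hf1 : 0 ≤ ((a - 1) ^ 2 + s ^ 2 - 8 * a) * (v - u) :=
      mul_nonneg hc (by linarith)
    have hf2 : 0 < 12 * a * v := by positivity
    have hf3 : 0 ≤ Real.pi * ((a - 1) ^ 2 + s ^ 2 - 8 * a) :=
      mul_nonneg (by positivity) hc
    have hf4 : 0 < Real.pi * ((a + 1) ^ 2 + s ^ 2) := by positivity
    nlinarith [hf1, hf2, hf3, hf4, hs]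
  · -- coefficient negative case
    have hCu : ((a - 1) ^ 2 + s ^ 2 - 8 * a) * u < 0 := mul_neg_of_neg_of_pos hc hu0
    have hP : (0:ℝ) < (a + 1) ^ 2 + s ^ 2 := by positivity
    have hPv' : ((a + 1) ^ 2 + s ^ 2) * (Real.pi / 2 - v)
        ≤ ((a + 1) ^ 2 + s ^ 2) * (s / (a + 1)) :=
      mul_le_mul_of_nonneg_left (by linarith) hP.le
    have hmul : (-6 * s - Real.pi * ((a + 1) ^ 2 + s ^ 2)
          - ((a - 1) ^ 2 + s ^ 2 - 8 * a) * (Real.pi / 2)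
          + ((a + 1) ^ 2 + s ^ 2) * (s / (a + 1))) * (a + 1)
        = -6 * s * (a + 1) - 3 * Real.pi / 2 * ((a - 1) ^ 2 + s ^ 2) * (a + 1)
          + ((a + 1) ^ 2 + s ^ 2) * s := by
      field_simp
      ring
    have hneg : -6 * s * (a + 1) - 3 * Real.pi / 2 * ((a - 1) ^ 2 + s ^ 2) * (a + 1)
        + ((a + 1) ^ 2 + s ^ 2) * s < 0 := by
      nlinarith [mul_pos hs (show (0:ℝ) < 8 * a - (a - 1) ^ 2 - s ^ 2 by linarith),
        sq_nonneg (s - (a - 1)),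
        mul_nonneg (mul_nonneg (show (0:ℝ) ≤ Real.pi - 3 by linarith)
          (show (0:ℝ) ≤ (a - 1) ^ 2 + s ^ 2 by positivity)) (show (0:ℝ) ≤ a + 1 by linarith),
        mul_nonneg (show (0:ℝ) ≤ a - 1 by linarith)
          (show (0:ℝ) ≤ (a - 1) ^ 2 + s ^ 2 by positivity),
        mul_pos hs hs, hs.le]
    have hfinal : -6 * s - Real.pi * ((a + 1) ^ 2 + s ^ 2)
        - ((a - 1) ^ 2 + s ^ 2 - 8 * a) * (Real.pi / 2)
        + ((a + 1) ^ 2 + s ^ 2) * (s / (a + 1)) < 0 := by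
      by_contra hcon
      push_neg at hcon
      have := mul_nonneg hcon (show (0:ℝ) ≤ a + 1 by linarith)
      rw [hmul] at this
      linarith
    nlinarith [hCu, hPv', hfinal]
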